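/- Assume ri(dom f*) ∩ range M* ≠ ∅ and ri(dom g*) ∩ range C* ≠ ∅ (ri denoting relative interior). Then for every (z*,w*) in the extended solution set S_e there exist u* ∈ ℝ^{m1} and v* ∈ ℝ^{m2} such that w* = d−Cv*, w* = Mu*, and (u*,v*,z*) is a saddle point of the Lagrangian L. -/

import Mathlib

open scoped RealInnerProductSpace

noncomputable section

/-- `w` is a subgradient of the extended-real-valued function `φ` at `x`. -/
def HasSubgrad {E : Type*} [NormedAddCommGroup E] [InnerProductSpace ℝ E]
    (φ : E → EReal) (w x : E) : Prop :=
  ∀ x' : E, φ x + ((⟪w, x' - x⟫ : ℝ) : EReal) ≤ φ x'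

/-- `w` is an `ε`-subgradient of `φ` at `x`. -/
def HasESubgrad {E : Type*} [NormedAddCommGroup E] [InnerProductSpace ℝ E]
    (φ : E → EReal) (ε : ℝ) (w x : E) : Prop :=
  ∀ x' : E, φ x + ((⟪w, x' - x⟫ : ℝ) : EReal) - (ε : EReal) ≤ φ x'

/-- Convexity for an extended-real-valued function. -/
def ConvexE {E : Type*} [NormedAddCommGroup E] [InnerProductSpace ℝ E]
    (φ : E → EReal) : Prop :=
  ∀ x y : E, ∀ a b : ℝ, 0 ≤ a → 0 ≤ b → a + b = 1 →
    φ (a • x + b • y) ≤ (a : EReal) * φ x + (b : EReal) * φ y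

/-- Proper closed convex function with values in `(-∞, ∞]`. -/
def IsPCC {E : Type*} [NormedAddCommGroup E] [InnerProductSpace ℝ E]
    (φ : E → EReal) : Prop :=
  (∀ x, φ x ≠ ⊥) ∧ (∃ x, φ x ≠ ⊤) ∧ LowerSemicontinuous φ ∧ ConvexE φ

/-- Fenchel conjugate. -/
def fconj {E : Type*} [NormedAddCommGroup E] [InnerProductSpace ℝ E]
    (φ : E → EReal) (w : E) : EReal :=
  ⨆ x : E, ((⟪w, x⟫ : ℝ) : EReal) - φ x

/-- Lagrangian of `min { f u + g v : M u + C v = d }`. -/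
def Lag {E₁ E₂ F : Type*} [NormedAddCommGroup E₁] [InnerProductSpace ℝ E₁]
    [NormedAddCommGroup E₂] [InnerProductSpace ℝ E₂]
    [NormedAddCommGroup F] [InnerProductSpace ℝ F]
    (f : E₁ → EReal) (g : E₂ → EReal) (M : E₁ →ₗ[ℝ] F) (C : E₂ →ₗ[ℝ] F) (d : F)
    (u : E₁) (v : E₂) (z : F) : EReal :=
  f u + g v + ((⟪M u + C v - d, z⟫ : ℝ) : EReal)

/-- Saddle point of the Lagrangian. -/
def IsSaddle {E₁ E₂ F : Type*} [NormedAddCommGroup E₁] [InnerProductSpace ℝ E₁]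
    [NormedAddCommGroup E₂] [InnerProductSpace ℝ E₂]
    [NormedAddCommGroup F] [InnerProductSpace ℝ F]
    (f : E₁ → EReal) (g : E₂ → EReal) (M : E₁ →ₗ[ℝ] F) (C : E₂ →ₗ[ℝ] F) (d : F)
    (us : E₁) (vs : E₂) (zs : F) : Prop :=
  Lag f g M C d us vs zs ≠ ⊤ ∧ Lag f g M C d us vs zs ≠ ⊥ ∧
  (∀ u v, Lag f g M C d us vs zs ≤ Lag f g M C d u v zs) ∧
  (∀ ζ, Lag f g M C d us vs ζ ≤ Lag f g M C d us vs zs)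

/-- `h₁(z) = f*(-M* z)`. -/
def hOne {E₁ F : Type*} [NormedAddCommGroup E₁] [InnerProductSpace ℝ E₁]
    [FiniteDimensional ℝ E₁] [NormedAddCommGroup F] [InnerProductSpace ℝ F]
    [FiniteDimensional ℝ F] (f : E₁ → EReal) (M : E₁ →ₗ[ℝ] F) (z : F) : EReal :=
  fconj f (-(LinearMap.adjoint M z))

/-- `h₂(z) = g*(-C* z) + ⟪d, z⟫`. -/
def hTwo {E₂ F : Type*} [NormedAddCommGroup E₂] [InnerProductSpace ℝ E₂]
    [FiniteDimensional ℝ E₂] [NormedAddCommGroup F] [InnerProductSpace ℝ F]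
    [FiniteDimensional ℝ F] (g : E₂ → EReal) (C : E₂ →ₗ[ℝ] F) (d : F) (z : F) : EReal :=
  fconj g (-(LinearMap.adjoint C z)) + ((⟪d, z⟫ : ℝ) : EReal)

/-- The extended solution set `S_e(∂h₁, ∂h₂)`. -/
def extSolSet {E₁ E₂ F : Type*} [NormedAddCommGroup E₁] [InnerProductSpace ℝ E₁]
    [FiniteDimensional ℝ E₁] [NormedAddCommGroup E₂] [InnerProductSpace ℝ E₂]
    [FiniteDimensional ℝ E₂] [NormedAddCommGroup F] [InnerProductSpace ℝ F]
    [FiniteDimensional ℝ F]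
    (f : E₁ → EReal) (g : E₂ → EReal) (M : E₁ →ₗ[ℝ] F) (C : E₂ →ₗ[ℝ] F) (d : F) :
    Set (F × F) :=
  {p | HasSubgrad (hOne f M) (-p.2) p.1 ∧ HasSubgrad (hTwo g C d) p.2 p.1}

section Aux

set_option linter.unusedSectionVars false

variable {E : Type*} [NormedAddCommGroup E] [InnerProductSpace ℝ E] [FiniteDimensional ℝ E]

/-- interior of closure of convex set with nonempty interior is inside the set -/
lemma conv_mem_of_interior_closure {K : Set E} (hK : Convex ℝ K)
    (hint : (interior K).Nonempty) {z : E} (hz : z ∈ interior (closure K)) : z ∈ K := by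
  obtain ⟨x₁, hx₁⟩ := hint
  by_cases hzx : z = x₁
  · exact hzx ▸ interior_subset hx₁
  -- find t > 0 with z + t • (z - x₁) ∈ interior (closure K)
  have hc : Continuous (fun t : ℝ => t • (z - x₁) + z) :=
    (continuous_id.smul continuous_const).add continuous_const
  have h0 : (fun t : ℝ => t • (z - x₁) + z) 0 ∈ interior (closure K) := by simpa using hz
  have hopen : IsOpen ((fun t : ℝ => t • (z - x₁) + z) ⁻¹' interior (closure K)) :=
    isOpen_interior.preimage hc
  have h0m : (0:ℝ) ∈ (fun t : ℝ => t • (z - x₁) + z) ⁻¹' interior (closure K) := h0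
  obtain ⟨δ, hδ, hball⟩ := Metric.isOpen_iff.1 hopen 0 h0m
  set t := δ/2 with ht
  have htpos : 0 < t := by positivity
  have htm : t • (z - x₁) + z ∈ closure K := by
    have : t ∈ Metric.ball (0:ℝ) δ := by
      rw [Metric.mem_ball, Real.dist_eq, sub_zero, abs_of_pos htpos]
      linarith
    exact interior_subset (hball this)
  -- z ∈ openSegment x₁ (t•(z-x₁)+z)
  have hseg : z ∈ openSegment ℝ x₁ (t • (z - x₁) + z) := by
    refine ⟨t/(1+t), 1/(1+t), by positivity, by positivity, ?_, ?_⟩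
    · field_simp; ring
    · have h1t : (1+t) ≠ 0 := by positivity
      match_scalars <;> (field_simp; try ring)
  have := hK.openSegment_interior_closure_subset_interior hx₁ htm hseg
  exact interior_subset this

set_option maxHeartbeats 1000000

/-- Weak separation of a convex set from the origin in finite dimensions. -/
lemma sep_base {K : Set E} (hK : Convex ℝ K) (hne : K.Nonempty) (h0 : (0:E) ∉ K) :
    ∃ u : E, u ≠ 0 ∧ ∀ k ∈ K, ⟪u, k⟫ ≤ 0 := by
  by_cases hcl : (0:E) ∈ closure K
  · by_cases hsp : affineSpan ℝ K = ⊤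
    · -- interior nonempty; frontier sequence argument
      have hint : (interior K).Nonempty :=
        (hK.interior_nonempty_iff_affineSpan_eq_top).2 hsp
      have h0i : (0:E) ∉ interior (closure K) := fun h =>
        h0 (conv_mem_of_interior_closure hK hint h)
      -- points outside closure K arbitrarily close to 0
      have hpt : ∀ n : ℕ, ∃ p : E, ‖p‖ < 1/(n+1) ∧ p ∉ closure K := by
        intro n
        by_contra hcon
        push_neg at hcon
        have : Metric.ball (0:E) (1/(n+1)) ⊆ closure K := by
          intro p hp
          exact hcon p (by simpa [Real.dist_eq] using Metric.mem_ball.1 hp)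
        exact h0i (mem_interior.2 ⟨Metric.ball 0 (1/(n+1)), this, Metric.isOpen_ball,
          Metric.mem_ball_self (by positivity)⟩)
      choose p hpn hpK using hpt
      have hsep : ∀ n : ℕ, ∃ g : E →L[ℝ] ℝ, ‖g‖ = 1 ∧ ∀ k ∈ K, g k ≤ ‖p n‖ := by
        intro n
        obtain ⟨f, c, hfc⟩ := geometric_hahn_banach_closed_point (hK.closure)
          isClosed_closure (hpK n)
        obtain ⟨hfa, hfc2⟩ := hfc
        have hf0 : f ≠ 0 := by
          intro h
          obtain ⟨k₀, hk₀⟩ := hne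
          have h1 := hfa k₀ (subset_closure hk₀)
          rw [h] at h1 hfc2
          simp at h1 hfc2
          linarith
        have hnf : 0 < ‖f‖ := norm_pos_iff.2 hf0
        refine ⟨‖f‖⁻¹ • f, ?_, ?_⟩
        · exact norm_smul_inv_norm hf0
        · intro k hk
          have h1 : f k < c := hfa k (subset_closure hk)
          have h2 : c < f (p n) := hfc2
          have h3 : f (p n) ≤ ‖f‖ * ‖p n‖ := (f.le_opNorm (p n)).trans' (le_abs_self _)
          have : (‖f‖⁻¹ • f) k = ‖f‖⁻¹ * f k := rfl
          rw [this]
          calc ‖f‖⁻¹ * f k ≤ ‖f‖⁻¹ * (‖f‖ * ‖p n‖) := by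
                apply mul_le_mul_of_nonneg_left _ (inv_nonneg.2 hnf.le)
                linarith
            _ = ‖p n‖ := by field_simp
      choose g hg1 hgk using hsep
      have hgs : ∀ n, g n ∈ Metric.sphere (0 : E →L[ℝ] ℝ) 1 := by
        intro n; simp [hg1 n]
      haveI : ProperSpace (E →L[ℝ] ℝ) := FiniteDimensional.proper ℝ _
      obtain ⟨glim, hglim, ψ, hψ, htend⟩ :=
        (isCompact_sphere (0 : E →L[ℝ] ℝ) 1).tendsto_subseq hgs
      refine ⟨(InnerProductSpace.toDual ℝ E).symm glim, ?_, ?_⟩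
      · intro h
        have : glim = 0 := by
          have := congrArg (InnerProductSpace.toDual ℝ E) h
          simpa using this
        rw [this] at hglim
        simp at hglim
      · intro k hk
        have hip : ⟪(InnerProductSpace.toDual ℝ E).symm glim, k⟫ = glim k := by
          exact InnerProductSpace.toDual_symm_apply
        rw [hip]
        have htk : Filter.Tendsto (fun n => g (ψ n) k) Filter.atTop (nhds (glim k)) := by
          have hc : Continuous fun φ : E →L[ℝ] ℝ => φ k :=
            (ContinuousLinearMap.apply ℝ ℝ k).continuous
          exact (hc.tendsto glim).comp htend
        have hpk : Filter.Tendsto (fun n => ‖p (ψ n)‖) Filter.atTop (nhds 0) := by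
          have h1 : Filter.Tendsto (fun n : ℕ => 1/((n:ℝ)+1)) Filter.atTop (nhds 0) :=
            tendsto_one_div_add_atTop_nhds_zero_nat
          have h2 : Filter.Tendsto (fun n => ‖p n‖) Filter.atTop (nhds 0) := by
            apply squeeze_zero (fun n => norm_nonneg _) (fun n => (hpn n).le) h1
          exact h2.comp hψ.tendsto_atTop
        exact le_of_tendsto_of_tendsto' htk hpk (fun n => hgk (ψ n) k hk)
    · -- affine span proper: orthogonal direction
      have h0sp : (0:E) ∈ affineSpan ℝ K := by
        have h1 : closure K ⊆ closure (affineSpan ℝ K : Set E) :=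
          closure_mono (subset_affineSpan ℝ K)
        have h2 : IsClosed (affineSpan ℝ K : Set E) :=
          (affineSpan ℝ K).closed_of_finiteDimensional
        exact h2.closure_subset (h1 hcl)
      set W := (affineSpan ℝ K).direction with hW
      have hKW : K ⊆ (W : Set E) := by
        intro k hk
        have := AffineSubspace.vsub_mem_direction (subset_affineSpan ℝ K hk) h0sp
        simpa using this
      have hWne : W ≠ ⊤ := by
        intro h
        apply hsp
        rw [eq_top_iff]
        intro x _
        have : x -ᵥ (0:E) ∈ W := h ▸ Submodule.mem_top
        simpa using AffineSubspace.vadd_mem_of_mem_direction this h0sp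
      have hWo : Wᗮ ≠ ⊥ := by
        intro h
        exact hWne (Submodule.orthogonal_eq_bot_iff.1 h)
      obtain ⟨u, huW, hu0⟩ := Submodule.exists_mem_ne_zero_of_ne_bot hWo
      refine ⟨u, hu0, fun k hk => ?_⟩
      have h := (Submodule.mem_orthogonal W u).1 huW k (hKW hk)
      rw [real_inner_comm] at h
      rw [h]
  · obtain ⟨f, c, hfa, hfc⟩ := geometric_hahn_banach_closed_point hK.closure
      isClosed_closure hcl
    refine ⟨(InnerProductSpace.toDual ℝ E).symm f, ?_, ?_⟩
    · intro h
      have hf : f = 0 := by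
        have := congrArg (InnerProductSpace.toDual ℝ E) h
        simpa using this
      obtain ⟨k₀, hk₀⟩ := hne
      have h1 := hfa k₀ (subset_closure hk₀)
      rw [hf] at h1 hfc
      simp at h1 hfc
      linarith
    · intro k hk
      have hip : ⟪(InnerProductSpace.toDual ℝ E).symm f, k⟫ = f k := by
        exact InnerProductSpace.toDual_symm_apply
      rw [hip]
      have h1 : f k < c := hfa k (subset_closure hk)
      have h2 : c < f 0 := hfc
      simp at h2
      linarith

/-- Weak separation with the separating vector in the span of the set. -/
lemma sep_span {K : Set E} (hK : Convex ℝ K) (hne : K.Nonempty) (h0 : (0:E) ∉ K) :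
    ∃ u : E, u ≠ 0 ∧ u ∈ Submodule.span ℝ K ∧ ∀ k ∈ K, ⟪u, k⟫ ≤ 0 := by
  set V := Submodule.span ℝ K with hV
  set K' : Set V := (V.subtype) ⁻¹' K with hK'
  have hK'conv : Convex ℝ K' := hK.linear_preimage V.subtype
  have hK'ne : K'.Nonempty := by
    obtain ⟨k, hk⟩ := hne
    exact ⟨⟨k, Submodule.subset_span hk⟩, hk⟩
  have h0' : (0 : V) ∉ K' := by
    intro h
    exact h0 (by simpa [hK'] using h)
  obtain ⟨u', hu'0, hu'⟩ := sep_base hK'conv hK'ne h0'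
  refine ⟨(u' : E), by simpa using hu'0, u'.2, fun k hk => ?_⟩
  have hk' : (⟨k, Submodule.subset_span hk⟩ : V) ∈ K' := hk
  have := hu' _ hk'
  rwa [Submodule.coe_inner] at this

set_option linter.unusedSectionVars false

/-- From a relative interior point one can step backwards away from any point of the set. -/
lemma ri_backstep {S : Set E} {x₀ y : E} (hx₀ : x₀ ∈ intrinsicInterior ℝ S) (hy : y ∈ S) :
    ∃ ε : ℝ, 0 < ε ∧ x₀ + ε • (x₀ - y) ∈ S := by
  rw [intrinsicInterior] at hx₀
  obtain ⟨q, hq, hqx⟩ := hx₀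
  have hx₀m : x₀ ∈ affineSpan ℝ S := hqx ▸ q.2
  have hym : y ∈ affineSpan ℝ S := subset_affineSpan ℝ S hy
  have hmem : ∀ t : ℝ, t • (x₀ - y) + x₀ ∈ affineSpan ℝ S := by
    intro t
    have := AffineSubspace.smul_vsub_vadd_mem (affineSpan ℝ S) t hx₀m hym hx₀m
    simpa [vsub_eq_sub, vadd_eq_add] using this
  set c : ℝ → (affineSpan ℝ S : Set E) := fun t => ⟨t • (x₀ - y) + x₀, hmem t⟩ with hc
  have hcont : Continuous c := by
    apply Continuous.subtype_mk
    exact (continuous_id.smul continuous_const).add continuous_const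
  have hc0 : c 0 = q := by
    apply Subtype.ext
    simp [hc, hqx]
  have hopen : IsOpen (c ⁻¹' interior (Subtype.val ⁻¹' S)) :=
    isOpen_interior.preimage hcont
  have h0m : (0:ℝ) ∈ c ⁻¹' interior (Subtype.val ⁻¹' S) := by
    simp only [Set.mem_preimage, hc0]; exact hq
  obtain ⟨δ, hδ, hball⟩ := Metric.isOpen_iff.1 hopen 0 h0m
  refine ⟨δ/2, by positivity, ?_⟩
  have : (δ/2) ∈ Metric.ball (0:ℝ) δ := by
    rw [Metric.mem_ball, Real.dist_eq, sub_zero, abs_of_pos (by positivity)]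
    linarith
  have hmem2 := interior_subset (hball this)
  rw [Set.mem_preimage] at hmem2
  have : (c (δ/2) : E) ∈ S := hmem2
  simpa [hc, add_comm] using this

/-! ### EReal helpers -/

lemma er_shift (x y : EReal) (r s : ℝ) : x + (r:EReal) ≤ y + (s:EReal) ↔ x + ((r-s:ℝ):EReal) ≤ y := by
  induction x using EReal.rec <;> induction y using EReal.rec
  · simp
  · simp
  · simp [EReal.bot_add]
  · simp [EReal.add_bot, EReal.bot_add, ← EReal.coe_sub]
  · rename_i a c
    rw [← EReal.coe_add, ← EReal.coe_add, ← EReal.coe_add,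
      EReal.coe_le_coe_iff, EReal.coe_le_coe_iff]
    constructor <;> intro h <;> linarith
  · simp [EReal.coe_add_top]
  · simp [EReal.top_add_coe, EReal.add_bot, ← EReal.coe_sub]
  · rename_i a
    rw [EReal.top_add_coe, EReal.top_add_coe, ← EReal.coe_add]
    simp only [top_le_iff]
    constructor
    · intro h; exact absurd h (EReal.coe_ne_top _)
    · intro h; exact absurd h (EReal.coe_ne_top _)
  · simp [EReal.top_add_coe, EReal.coe_add_top, ← EReal.coe_sub]

lemma er_sub_le (a r : ℝ) (x : EReal) (h : (a:EReal) - x ≤ (r:EReal)) :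
    ((a - r:ℝ):EReal) ≤ x := by
  induction x using EReal.rec
  · rw [EReal.sub_bot (EReal.coe_ne_bot a)] at h
    simp at h
  · rename_i c
    rw [← EReal.coe_sub, EReal.coe_le_coe_iff] at h
    rw [EReal.coe_le_coe_iff]
    linarith
  · simp

lemma er_le_sub (a r : ℝ) (x : EReal) (h : ((a - r:ℝ):EReal) ≤ x) :
    (a:EReal) - x ≤ (r:EReal) := by
  induction x using EReal.rec
  · exact absurd (le_bot_iff.1 h) (EReal.coe_ne_bot _)
  · rename_i c
    rw [EReal.coe_le_coe_iff] at h
    rw [← EReal.coe_sub, EReal.coe_le_coe_iff]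
    linarith
  · simp [EReal.sub_top]

lemma er_real_of_ne (x : EReal) (h1 : x ≠ ⊥) (h2 : x ≠ ⊤) : ∃ c : ℝ, x = (c:EReal) := by
  induction x using EReal.rec
  · exact absurd rfl h1
  · exact ⟨_, rfl⟩
  · exact absurd rfl h2

open WithLp Pointwise in
set_option maxHeartbeats 2000000 in
/-- Key separation: a subgradient on a subspace extends to a global subgradient,
under the relative interior condition. -/
lemma episep (φ : E → EReal) (hconv : ConvexE φ) (hbot : ∀ x, φ x ≠ ⊥)
    (L : Submodule ℝ E) (b : E) (hbL : b ∈ L) (r : ℝ) (hbr : φ b = (r:EReal))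
    (u₀ : E) (hβ : ∀ x ∈ L, φ b + ((⟪u₀, x - b⟫:ℝ):EReal) ≤ φ x)
    (x₀ : E) (hx₀L : x₀ ∈ L) (hx₀ : x₀ ∈ intrinsicInterior ℝ {x | φ x < ⊤}) :
    ∃ u : E, (∀ y ∈ L, ⟪u - u₀, y⟫ = (0:ℝ)) ∧
      ∀ x, φ b + ((⟪u, x - b⟫:ℝ):EReal) ≤ φ x := by
  classical
  haveI : FiniteDimensional ℝ (WithLp 2 (E × ℝ)) :=
    Module.Finite.equiv (WithLp.linearEquiv 2 ℝ (E × ℝ)).symm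
  set toP : E → ℝ → WithLp 2 (E × ℝ) := fun x t => (WithLp.equiv 2 (E × ℝ)).symm (x, t)
    with htoP
  set S₁ : Set (WithLp 2 (E × ℝ)) := {p | φ p.fst ≤ (p.snd : EReal)} with hS₁def
  set S₂ : Set (WithLp 2 (E × ℝ)) :=
    {p | p.fst ∈ L ∧ p.snd < r + ⟪u₀, p.fst - b⟫} with hS₂def
  have hfst : ∀ (p q : WithLp 2 (E × ℝ)) (a a' : ℝ),
      (a • p + a' • q).fst = a • p.fst + a' • q.fst := fun _ _ _ _ => rfl
  have hsnd : ∀ (p q : WithLp 2 (E × ℝ)) (a a' : ℝ),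
      (a • p + a' • q).snd = a * p.snd + a' * q.snd := fun _ _ _ _ => rfl
  have hS₁conv : Convex ℝ S₁ := by
    rintro p hp q hq a a' ha ha' haa
    show φ (a • p + a' • q).fst ≤ (((a • p + a' • q).snd : ℝ) : EReal)
    rw [hfst, hsnd]
    calc φ (a • p.fst + a' • q.fst) ≤ (a:EReal) * φ p.fst + (a':EReal) * φ q.fst :=
          hconv _ _ _ _ ha ha' haa
      _ ≤ (a:EReal) * ((p.snd:ℝ):EReal) + (a':EReal) * ((q.snd:ℝ):EReal) := by
          exact add_le_add (mul_le_mul_of_nonneg_left hp (by exact_mod_cast ha))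
            (mul_le_mul_of_nonneg_left hq (by exact_mod_cast ha'))
      _ = (((a * p.snd + a' * q.snd : ℝ)):EReal) := by
          rw [EReal.coe_add, EReal.coe_mul, EReal.coe_mul]
  have hS₂conv : Convex ℝ S₂ := by
    rintro p hp q hq a a' ha ha' haa
    obtain ⟨hpL, hps⟩ := hp
    obtain ⟨hqL, hqs⟩ := hq
    constructor
    · rw [hfst]
      exact L.add_mem (L.smul_mem a hpL) (L.smul_mem a' hqL)
    · rw [hfst, hsnd]
      have hb : a • b + a' • b = b := by rw [← add_smul, haa, one_smul]
      have hib : a • p.fst + a' • q.fst - b = a • (p.fst - b) + a' • (q.fst - b) := by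
        calc a • p.fst + a' • q.fst - b = a • p.fst + a' • q.fst - (a • b + a' • b) := by
              rw [hb]
          _ = a • (p.fst - b) + a' • (q.fst - b) := by
              rw [smul_sub, smul_sub]; abel
      rw [hib, inner_add_right, real_inner_smul_right, real_inner_smul_right]
      rcases eq_or_lt_of_le ha with h0|hap
      · have ha1 : a' = 1 := by linarith
        rw [← h0, ha1]
        simpa using hqs
      · rcases eq_or_lt_of_le ha' with h0|ha'p
        · have ha1 : a = 1 := by linarith
          rw [← h0, ha1]
          simpa using hps
        · have k1 : a * p.snd < a * (r + ⟪u₀, p.fst - b⟫) := mul_lt_mul_of_pos_left hps hap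
          have k2 : a' * q.snd < a' * (r + ⟪u₀, q.fst - b⟫) := mul_lt_mul_of_pos_left hqs ha'p
          rw [mul_add] at k1 k2
          have hr : a * r + a' * r = r := by rw [← add_mul, haa, one_mul]
          linarith
  have hbP : toP b r ∈ S₁ := by
    show φ b ≤ ((r:ℝ):EReal)
    rw [hbr]
  have hb2 : toP b (r-1) ∈ S₂ := by
    refine ⟨hbL, ?_⟩
    show r - 1 < r + ⟪u₀, b - b⟫
    simp
  set K : Set (WithLp 2 (E × ℝ)) := S₁ - S₂ with hKdef
  have hKconv : Convex ℝ K := hS₁conv.sub hS₂conv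
  have hKne : K.Nonempty := ⟨toP b r - toP b (r-1), Set.sub_mem_sub hbP hb2⟩
  have hK0 : (0 : WithLp 2 (E × ℝ)) ∉ K := by
    rintro ⟨p, hp, q, hq, hpq⟩
    have : p = q := by rwa [sub_eq_zero] at hpq
    subst this
    obtain ⟨hqL, hqs⟩ := hq
    have h1 : ((r + ⟪u₀, p.fst - b⟫:ℝ):EReal) ≤ ((p.snd:ℝ):EReal) := by
      have h2 := hβ p.fst hqL
      rw [hbr, ← EReal.coe_add] at h2
      exact h2.trans hp
    rw [EReal.coe_le_coe_iff] at h1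
    linarith
  obtain ⟨U, hU0, hUspan, hUle⟩ := sep_span hKconv hKne hK0
  have hinner : ∀ p : WithLp 2 (E × ℝ), ⟪U, p⟫ = ⟪U.fst, p.fst⟫ + U.snd * p.snd := by
    intro p
    rw [WithLp.prod_inner_apply]
    norm_num [RCLike.inner_apply]
    ring
  set w : E := U.fst with hw
  set γ : ℝ := U.snd with hγ
  -- the key scalar inequality
  have key : ∀ (y : E) (t : ℝ), φ y ≤ (t:EReal) → ∀ x ∈ L, ∀ s : ℝ,
      s < r + ⟪u₀, x - b⟫ → ⟪w, y⟫ + γ * t ≤ ⟪w, x⟫ + γ * s := by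
    intro y t hyt x hx s hs
    have hm1 : toP y t ∈ S₁ := hyt
    have hm2 : toP x s ∈ S₂ := ⟨hx, hs⟩
    have hmem : toP y t - toP x s ∈ K := Set.sub_mem_sub hm1 hm2
    have := hUle _ hmem
    rw [inner_sub_right, hinner, hinner] at this
    have hy1 : (toP y t).fst = y := rfl
    have hy2 : (toP y t).snd = t := rfl
    have hx1 : (toP x s).fst = x := rfl
    have hx2 : (toP x s).snd = s := rfl
    rw [hy1, hy2, hx1, hx2] at this
    linarith
  have hγ0 : γ ≤ 0 := by
    have := key b r hbr.le b hbL (r-1) (by simp)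
    nlinarith [this]
  rcases eq_or_lt_of_le hγ0 with hγeq|hγneg
  · -- degenerate case: contradiction
    exfalso
    have hx₀dom' : x₀ ∈ {x : E | φ x < ⊤} := intrinsicInterior_subset hx₀
    have hx₀dom : φ x₀ < ⊤ := hx₀dom'
    have hw1 : ∀ y : E, φ y ≠ ⊤ → ∀ x ∈ L, ⟪w, y⟫ ≤ ⟪w, x⟫ := by
      intro y hy x hx
      obtain ⟨ρ, hρ⟩ := er_real_of_ne _ (hbot y) hy
      have := key y ρ hρ.le x hx (r + ⟪u₀, x - b⟫ - 1) (by linarith)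
      rw [hγeq] at this
      linarith
    have hwL : ∀ x ∈ L, ⟪w, x⟫ = 0 := by
      intro x hx
      by_contra hne
      have h1 := hw1 x₀ hx₀dom.ne ((( ⟪w, x₀⟫ - 1)/⟪w, x⟫) • x) (L.smul_mem _ hx)
      rw [real_inner_smul_right, div_mul_cancel₀ _ hne] at h1
      linarith
    have hwdom : ∀ y : E, φ y ≠ ⊤ → ⟪w, y⟫ = 0 := by
      intro y hy
      have h1 : ⟪w, y⟫ ≤ 0 := by simpa using hw1 y hy 0 L.zero_mem
      obtain ⟨ε, hε, hmem⟩ := ri_backstep hx₀ (show y ∈ {x | φ x < ⊤} from lt_top_iff_ne_top.2 hy)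
      have h2 : ⟪w, x₀ + ε • (x₀ - y)⟫ ≤ 0 := by
        have := hw1 _ (lt_top_iff_ne_top.1 hmem) 0 L.zero_mem
        simpa using this
      rw [inner_add_right, real_inner_smul_right, inner_sub_right,
        hwL x₀ hx₀L] at h2
      have : -(ε * ⟪w, y⟫) ≤ 0 := by simpa using h2
      nlinarith
    have hUzero : ∀ k ∈ K, ⟪U, k⟫ = 0 := by
      rintro k ⟨p, hp, q, hq, rfl⟩
      have hpdom : φ p.fst ≠ ⊤ := by
        intro h
        have hp' : φ p.fst ≤ ((p.snd : ℝ) : EReal) := hp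
        rw [h] at hp'
        exact absurd (top_le_iff.1 hp') (EReal.coe_ne_top _)
      rw [inner_sub_right, hinner, hinner, hγeq, hwdom _ hpdom, hwL _ hq.1]
      ring
    have hUU : ⟪U, U⟫ = (0:ℝ) := by
      have : ∀ v ∈ Submodule.span ℝ K, ⟪U, v⟫ = (0:ℝ) := by
        intro v hv
        induction hv using Submodule.span_induction with
        | mem x hx => exact hUzero x hx
        | zero => simp
        | add x y _ _ hx hy => rw [inner_add_right, hx, hy]; ring
        | smul a x _ hx => rw [real_inner_smul_right, hx]; ring
      exact this U hUspan
    exact hU0 (inner_self_eq_zero.1 hUU)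
  · -- main case γ < 0
    set c : ℝ := (-γ)⁻¹ with hc
    have hγne : γ ≠ 0 := ne_of_lt hγneg
    have hcpos : 0 < c := by
      rw [hc]
      exact inv_pos.2 (neg_pos.2 hγneg)
    have hcγ : c * γ = -1 := by
      rw [hc]
      field_simp
    have claimA : ∀ (y : E) (t : ℝ), φ y ≤ (t:EReal) → ∀ x ∈ L,
        ⟪w, y⟫ + γ * t ≤ ⟪w, x⟫ + γ * (r + ⟪u₀, x - b⟫) := by
      intro y t hyt x hx
      by_contra hcon
      push_neg at hcon
      set A := ⟪w, y⟫ + γ * t with hA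
      set B := ⟪w, x⟫ + γ * (r + ⟪u₀, x - b⟫) with hB
      set ε : ℝ := (A - B) / (-γ) / 2 with hε
      have hεpos : 0 < ε := by
        have h1 : 0 < A - B := by linarith
        have h2 : 0 < -γ := neg_pos.2 hγneg
        rw [hε]
        exact div_pos (div_pos h1 h2) two_pos
      have := key y t hyt x hx (r + ⟪u₀, x - b⟫ - ε) (by linarith)
      have hexp : γ * (r + ⟪u₀, x - b⟫ - ε) = γ * (r + ⟪u₀, x - b⟫) - γ * ε := by ring
      rw [hexp] at this
      have hγε : -(γ * ε) = (A - B)/2 := by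
        rw [hε]
        field_simp
      have hfin : A ≤ B + (A - B)/2 := by
        rw [← hγε]
        linarith
      linarith
    set u : E := c • w with hu
    have hinner_u : ∀ y : E, ⟪u, y - b⟫ = c * ⟪w, y⟫ - c * ⟪w, b⟫ := by
      intro y
      rw [hu, real_inner_smul_left, inner_sub_right]
      ring
    have hsub : ∀ (y : E) (t : ℝ), φ y ≤ (t:EReal) → r + ⟪u, y - b⟫ ≤ t := by
      intro y t hyt
      have h1 := claimA y t hyt b hbL
      simp only [sub_self, inner_zero_right, add_zero] at h1
      have h2 := mul_le_mul_of_nonneg_left h1 hcpos.le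
      have e1 : c * (⟪w, y⟫ + γ * t) = c * ⟪w, y⟫ + (c*γ) * t := by ring
      have e2 : c * (⟪w, b⟫ + γ * r) = c * ⟪w, b⟫ + (c*γ) * r := by ring
      rw [e1, e2, hcγ] at h2
      have h3 := hinner_u y
      linarith
    refine ⟨u, ?_, ?_⟩
    · have horth0 : ∀ x ∈ L, 0 ≤ ⟪u - u₀, x - b⟫ := by
        intro x hx
        have h1 := claimA b r hbr.le x hx
        have h2 := mul_le_mul_of_nonneg_left h1 hcpos.le
        have e1 : c * (⟪w, b⟫ + γ * r) = c * ⟪w, b⟫ + (c*γ) * r := by ring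
        have e2 : c * (⟪w, x⟫ + γ * (r + ⟪u₀, x - b⟫))
            = c * ⟪w, x⟫ + (c*γ) * r + (c*γ) * ⟪u₀, x - b⟫ := by ring
        rw [e1, e2, hcγ] at h2
        have h3 : ⟪u - u₀, x - b⟫ = (c * ⟪w, x⟫ - c * ⟪w, b⟫) - ⟪u₀, x - b⟫ := by
          rw [inner_sub_left, hinner_u x]
        linarith
      intro y hy
      have hp := horth0 (b + y) (L.add_mem hbL hy)
      have hm := horth0 (b + (-1:ℝ) • y) (L.add_mem hbL (L.smul_mem _ hy))
      have hep : (b + y) - b = y := by abel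
      have hem : (b + (-1:ℝ) • y) - b = -y := by
        rw [neg_one_smul]; abel
      rw [hep] at hp
      rw [hem, inner_neg_right] at hm
      linarith
    · intro x
      rcases eq_or_ne (φ x) ⊤ with hx|hx
      · rw [hx, hbr, ← EReal.coe_add]
        exact le_top
      · obtain ⟨ρ, hρ⟩ := er_real_of_ne _ (hbot x) hx
        have h1 := hsub x ρ hρ.le
        rw [hρ, hbr, ← EReal.coe_add, EReal.coe_le_coe_iff]
        exact h1

lemma fconj_le {f : E → EReal} {y : E} {c : ℝ}
    (h : ∀ x, ((⟪y, x⟫ - c : ℝ) : EReal) ≤ f x) : fconj f y ≤ (c : EReal) :=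
  iSup_le fun x => er_le_sub _ _ _ (h x)

lemma fconj_ge (f : E → EReal) (y x : E) :
    ((⟪y, x⟫ : ℝ) : EReal) - f x ≤ fconj f y :=
  le_iSup (fun x : E => ((⟪y, x⟫ : ℝ) : EReal) - f x) x

lemma fy_minorant {f : E → EReal} {y : E} {s : ℝ} (h : fconj f y ≤ (s : EReal)) (x : E) :
    ((⟪y, x⟫ - s : ℝ) : EReal) ≤ f x :=
  er_sub_le _ _ _ ((fconj_ge f y x).trans h)

open WithLp in
set_option maxHeartbeats 2000000 in
/-- Fenchel–Moreau equality at a point where the biconjugate subgradient exists. -/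
lemma fm_point (f : E → EReal) (hconv : ConvexE f) (hbot : ∀ x, f x ≠ ⊥)
    (hlsc : LowerSemicontinuous f) (x₁ : E) (r₁ : ℝ) (hx₁ : f x₁ = (r₁:EReal))
    (b u : E) (s : ℝ) (hfb : fconj f b = (s:EReal))
    (hsub : ∀ y, fconj f b + ((⟪u, y - b⟫:ℝ):EReal) ≤ fconj f y) :
    f u = ((⟪u, b⟫ - s : ℝ) : EReal) := by
  classical
  haveI : FiniteDimensional ℝ (WithLp 2 (E × ℝ)) :=
    Module.Finite.equiv (WithLp.linearEquiv 2 ℝ (E × ℝ)).symm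
  set ρ : ℝ := ⟪u, b⟫ - s with hρdef
  have hge : ((ρ:ℝ):EReal) ≤ f u := by
    have h1 := fy_minorant (le_of_eq hfb) u
    have h2 : ⟪b, u⟫ = ⟪u, b⟫ := real_inner_comm _ _
    rwa [h2] at h1
  -- the dual bound
  have hDual : ∀ (y : E) (c : ℝ), (∀ x, ((⟪y, x⟫ - c : ℝ) : EReal) ≤ f x) →
      s + ⟪u, y - b⟫ ≤ c := by
    intro y c h
    have h1 : fconj f y ≤ (c:EReal) := fconj_le h
    have h2 := (hsub y).trans h1
    rw [hfb, ← EReal.coe_add, EReal.coe_le_coe_iff] at h2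
    exact h2
  -- suppose f u > ρ
  rcases eq_or_lt_of_le hge with heq|hlt
  · exact heq.symm
  exfalso
  -- epigraph in WithLp 2 (E × ℝ)
  set epi : Set (WithLp 2 (E × ℝ)) := {p | f p.fst ≤ ((p.snd:ℝ):EReal)} with hepidef
  have hepiconv : Convex ℝ epi := by
    rintro p hp q hq a a' ha ha' haa
    show f (a • p + a' • q).fst ≤ (((a • p + a' • q).snd : ℝ) : EReal)
    have h1 : (a • p + a' • q).fst = a • p.fst + a' • q.fst := rfl
    have h2 : (a • p + a' • q).snd = a * p.snd + a' * q.snd := rfl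
    rw [h1, h2]
    calc f (a • p.fst + a' • q.fst) ≤ (a:EReal) * f p.fst + (a':EReal) * f q.fst :=
          hconv _ _ _ _ ha ha' haa
      _ ≤ (a:EReal) * ((p.snd:ℝ):EReal) + (a':EReal) * ((q.snd:ℝ):EReal) :=
          add_le_add (mul_le_mul_of_nonneg_left hp (by exact_mod_cast ha))
            (mul_le_mul_of_nonneg_left hq (by exact_mod_cast ha'))
      _ = (((a * p.snd + a' * q.snd : ℝ)):EReal) := by
          rw [EReal.coe_add, EReal.coe_mul, EReal.coe_mul]
  have hepicl : IsClosed epi := by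
    have h1 : IsClosed {y : E × EReal | f y.1 ≤ y.2} := hlsc.isClosed_epigraph
    have h2 : Continuous (fun q : E × ℝ => ((q.1 : E), ((q.2:ℝ) : EReal))) :=
      continuous_fst.prodMk (continuous_coe_real_ereal.comp continuous_snd)
    have h3 : IsClosed {q : E × ℝ | f q.1 ≤ ((q.2:ℝ):EReal)} := h1.preimage h2
    have h4 : Continuous (fun p : WithLp 2 (E × ℝ) => ((p.fst, p.snd) : E × ℝ)) :=
      (WithLp.prodContinuousLinearEquiv 2 ℝ E ℝ).continuous
    exact h3.preimage h4
  -- generic separation of a point below the epigraph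
  have hsep : ∀ (z : E) (τ : ℝ), ¬ (f z ≤ (τ:EReal)) →
      ∃ (w : E) (γ c : ℝ), γ ≤ 0 ∧
        (∀ (x : E) (t : ℝ), f x ≤ (t:EReal) → ⟪w, x⟫ + γ * t < c) ∧
        c < ⟪w, z⟫ + γ * τ := by
    intro z τ hzτ
    have hz : (WithLp.equiv 2 (E × ℝ)).symm (z, τ) ∉ epi := hzτ
    obtain ⟨F, c, hF1, hF2⟩ := geometric_hahn_banach_closed_point hepiconv hepicl hz
    set V := (InnerProductSpace.toDual ℝ (WithLp 2 (E × ℝ))).symm F with hV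
    have hVF : ∀ p, ⟪V, p⟫ = F p := fun p => InnerProductSpace.toDual_symm_apply
    have hinner : ∀ p : WithLp 2 (E × ℝ), ⟪V, p⟫ = ⟪V.fst, p.fst⟫ + V.snd * p.snd := by
      intro p
      rw [WithLp.prod_inner_apply]
      norm_num [RCLike.inner_apply]
      ring
    refine ⟨V.fst, V.snd, c, ?_, ?_, ?_⟩
    · by_contra hγpos
      push_neg at hγpos
      set t : ℝ := max r₁ ((c - ⟪V.fst, x₁⟫) / V.snd) with ht
      have hmem : (WithLp.equiv 2 (E × ℝ)).symm (x₁, t) ∈ epi := by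
        show f x₁ ≤ ((t:ℝ):EReal)
        rw [hx₁]
        exact_mod_cast le_max_left _ _
      have h5 := hF1 _ hmem
      rw [← hVF, hinner] at h5
      have h6 : ⟪V.fst, x₁⟫ + V.snd * t < c := h5
      have h7 : V.snd * ((c - ⟪V.fst, x₁⟫) / V.snd) ≤ V.snd * t :=
        mul_le_mul_of_nonneg_left (le_max_right _ _) hγpos.le
      rw [mul_div_cancel₀ _ (ne_of_gt hγpos)] at h7
      linarith
    · intro x t hxt
      have hmem : (WithLp.equiv 2 (E × ℝ)).symm (x, t) ∈ epi := hxt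
      have h5 := hF1 _ hmem
      rw [← hVF, hinner] at h5
      exact h5
    · have h5 := hF2
      rw [← hVF, hinner] at h5
      exact h5
  obtain ⟨w, γ, c, hγ0, hwlt, hwgt⟩ := hsep u ρ (by
    intro h
    exact absurd h (not_le.2 hlt))
  have hcomm : ⟪w, u⟫ = ⟪u, w⟫ := real_inner_comm _ _
  rw [hcomm] at hwgt
  -- hwgt : c < ⟪u, w⟫ + γ * ρ
  set δ : ℝ := ⟪u, w⟫ - c + (-γ) * (s - ⟪u, b⟫) with hδdef
  have hδpos : 0 < δ := by
    have : (-γ) * (s - ⟪u, b⟫) = γ * ρ := by rw [hρdef]; ring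
    rw [hδdef, this]
    linarith
  -- second separation for the affine minorant
  obtain ⟨w₀, γ₀, c₀, hγ₀0, hw₀lt, hw₀gt⟩ := hsep x₁ (r₁ - 1) (by
    rw [hx₁]
    intro h
    rw [EReal.coe_le_coe_iff] at h
    linarith)
  have hγ₀neg : γ₀ < 0 := by
    rcases eq_or_lt_of_le hγ₀0 with hγeq|h
    · exfalso
      have h5 := hw₀lt x₁ r₁ hx₁.le
      rw [hγeq, zero_mul, add_zero] at h5 hw₀gt
      linarith
    · exact h
  -- for every k > 0 we get a bound  k * δ ≤ C₀
  set C₀ : ℝ := c₀ - ⟪u, w₀⟫ - (-γ₀) * (s - ⟪u, b⟫) with hC₀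
  have hkbound : ∀ k : ℝ, 0 < k → k * δ ≤ C₀ := by
    intro k hk
    set D : ℝ := -γ₀ - k * γ with hD
    have hDpos : 0 < D := by
      have h1 : 0 ≤ -(k * γ) := by nlinarith
      rw [hD]
      nlinarith
    set yk : E := D⁻¹ • (w₀ + k • w) with hyk
    set ck : ℝ := D⁻¹ * (c₀ + k * c) with hck
    have hmin : ∀ x, ((⟪yk, x⟫ - ck : ℝ) : EReal) ≤ f x := by
      intro x
      rcases eq_or_ne (f x) ⊤ with hx|hx
      · rw [hx]; exact le_top
      · obtain ⟨ρx, hρx⟩ := er_real_of_ne _ (hbot x) hx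
        have h5 := hw₀lt x ρx hρx.le
        have h6 := hwlt x ρx hρx.le
        have h6k := mul_lt_mul_of_pos_left h6 hk
        have hsum : ⟪w₀, x⟫ + k * ⟪w, x⟫ - (c₀ + k * c) < D * ρx := by
          rw [hD]; nlinarith [h5, h6k]
        have hin : ⟪yk, x⟫ = D⁻¹ * (⟪w₀, x⟫ + k * ⟪w, x⟫) := by
          rw [hyk, real_inner_smul_left, inner_add_left, real_inner_smul_left]
        rw [hρx, EReal.coe_le_coe_iff, hin, hck]
        have h7 : D⁻¹ * (⟪w₀, x⟫ + k * ⟪w, x⟫) - D⁻¹ * (c₀ + k * c)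
            = D⁻¹ * ((⟪w₀, x⟫ + k * ⟪w, x⟫) - (c₀ + k * c)) := by ring
        rw [h7]
        calc D⁻¹ * ((⟪w₀, x⟫ + k * ⟪w, x⟫) - (c₀ + k * c)) ≤ D⁻¹ * (D * ρx) :=
              mul_le_mul_of_nonneg_left hsum.le (inv_nonneg.2 hDpos.le)
          _ = ρx := by field_simp
    have h8 := hDual yk ck hmin
    rw [inner_sub_right, hyk, real_inner_smul_right, inner_add_right,
      real_inner_smul_right, hck] at h8
    -- s + D⁻¹(⟪u,w₀⟫ + k⟪u,w⟫) - ⟪u,b⟫ ≤ D⁻¹(c₀ + k c)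
    have h9 := mul_le_mul_of_nonneg_left h8 hDpos.le
    have h10 : D * (s + (D⁻¹ * (⟪u, w₀⟫ + k * ⟪u, w⟫) - ⟪u, b⟫))
        = D * (s - ⟪u, b⟫) + ⟪u, w₀⟫ + k * ⟪u, w⟫ := by
      field_simp
      ring
    have h11 : D * (D⁻¹ * (c₀ + k * c)) = c₀ + k * c := by
      field_simp
    rw [h10, h11] at h9
    -- D = -γ₀ + k * (-γ)
    rw [hδdef, hC₀]
    have hDexp : D = -γ₀ + k * (-γ) := by rw [hD]; ring
    rw [hDexp] at h9
    nlinarith [h9]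
  -- contradiction: take k large
  set k : ℝ := (|C₀| + 1) / δ with hk
  have hkpos : 0 < k := by
    rw [hk]
    positivity
  have := hkbound k hkpos
  rw [hk, div_mul_cancel₀ _ (ne_of_gt hδpos)] at this
  have habs : C₀ ≤ |C₀| := le_abs_self _
  linarith

lemma fconj_ne_bot {f : E → EReal} {x₁ : E} {r₁ : ℝ} (hx₁ : f x₁ = (r₁:EReal)) (y : E) :
    fconj f y ≠ ⊥ := by
  intro h
  have h1 := fconj_ge f y x₁
  rw [hx₁, h, ← EReal.coe_sub] at h1
  exact absurd (le_bot_iff.1 h1) (EReal.coe_ne_bot _)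

lemma fconj_convex (f : E → EReal) (hbot : ∀ x, f x ≠ ⊥) : ConvexE (fconj f) := by
  intro w₁ w₂ a b ha hb hab
  rcases eq_or_lt_of_le ha with ha0|hapos
  · have hb1 : b = 1 := by linarith
    rw [← ha0, hb1]
    simp
  rcases eq_or_lt_of_le hb with hb0|hbpos
  · have ha1 : a = 1 := by linarith
    rw [← hb0, ha1]
    simp
  apply iSup_le
  intro x
  rcases eq_or_ne (f x) ⊤ with hx|hx
  · rw [hx, EReal.sub_top]
    exact bot_le
  obtain ⟨ρ, hρ⟩ := er_real_of_ne _ (hbot x) hx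
  have hlin : ⟪a • w₁ + b • w₂, x⟫ = a * ⟪w₁, x⟫ + b * ⟪w₂, x⟫ := by
    rw [inner_add_left, real_inner_smul_left, real_inner_smul_left]
  rw [hρ, ← EReal.coe_sub, hlin]
  have key : a * ⟪w₁, x⟫ + b * ⟪w₂, x⟫ - ρ
      = a * (⟪w₁, x⟫ - ρ) + b * (⟪w₂, x⟫ - ρ) := by
    have : a * ρ + b * ρ = ρ := by rw [← add_mul, hab, one_mul]
    ring_nf
    nlinarith [this]
  rw [key, EReal.coe_add, EReal.coe_mul, EReal.coe_mul]
  have h1 : ((⟪w₁, x⟫ - ρ : ℝ) : EReal) ≤ fconj f w₁ := by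
    have := fconj_ge f w₁ x
    rwa [hρ, ← EReal.coe_sub] at this
  have h2 : ((⟪w₂, x⟫ - ρ : ℝ) : EReal) ≤ fconj f w₂ := by
    have := fconj_ge f w₂ x
    rwa [hρ, ← EReal.coe_sub] at this
  exact add_le_add (mul_le_mul_of_nonneg_left h1 (by exact_mod_cast ha))
    (mul_le_mul_of_nonneg_left h2 (by exact_mod_cast hb))

set_option maxHeartbeats 1000000 in
lemma core {F : Type*} [NormedAddCommGroup F] [InnerProductSpace ℝ F] [FiniteDimensional ℝ F]
    (φ : E → EReal) (hconv : ConvexE φ) (hbot : ∀ x, φ x ≠ ⊥)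
    (A : F →ₗ[ℝ] E) (zs : F) (w : F)
    (hsub : ∀ z' : F, φ (A zs) + ((⟪w, z' - zs⟫:ℝ):EReal) ≤ φ (A z'))
    (x₀ : E) (hx₀ri : x₀ ∈ intrinsicInterior ℝ {x | φ x < ⊤}) (ζ₀ : F) (hx₀A : A ζ₀ = x₀) :
    ∃ (u : E) (r : ℝ), φ (A zs) = (r:EReal) ∧ LinearMap.adjoint A u = w ∧
      ∀ x : E, φ (A zs) + ((⟪u, x - A zs⟫:ℝ):EReal) ≤ φ x := by
  have hx₀dom' : x₀ ∈ {x : E | φ x < ⊤} := intrinsicInterior_subset hx₀ri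
  have hx₀dom : φ x₀ < ⊤ := hx₀dom'
  have hbne : φ (A zs) ≠ ⊤ := by
    intro h
    have h1 := hsub ζ₀
    rw [h, EReal.top_add_coe, hx₀A] at h1
    rw [top_le_iff.1 h1] at hx₀dom
    exact absurd hx₀dom (lt_irrefl _)
  obtain ⟨r, hbr⟩ := er_real_of_ne _ (hbot (A zs)) hbne
  -- w vanishes on ker A
  have hker : ∀ h ∈ LinearMap.ker A, ⟪h, w⟫ = (0:ℝ) := by
    intro h hh
    rw [LinearMap.mem_ker] at hh
    have key : ∀ t : ℝ, t * ⟪w, h⟫ ≤ 0 := by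
      intro t
      have h1 := hsub (zs + t • h)
      rw [map_add, map_smul, hh, smul_zero, add_zero, add_sub_cancel_left,
        real_inner_smul_right, hbr, ← EReal.coe_add, EReal.coe_le_coe_iff] at h1
      linarith
    have h1 := key 1
    have h2 := key (-1)
    rw [real_inner_comm]
    linarith
  -- w is in the range of the adjoint
  have hrange : LinearMap.range (LinearMap.adjoint A) = (LinearMap.ker A)ᗮ := by
    have horth : (LinearMap.range (LinearMap.adjoint A))ᗮ = LinearMap.ker A := by
      ext v
      rw [Submodule.mem_orthogonal, LinearMap.mem_ker]
      constructor
      · intro h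
        have h1 := h (LinearMap.adjoint A (A v)) ⟨A v, rfl⟩
        rw [LinearMap.adjoint_inner_left] at h1
        exact inner_self_eq_zero.1 h1
      · rintro h _ ⟨y, rfl⟩
        rw [LinearMap.adjoint_inner_left, h, inner_zero_right]
    rw [← horth, Submodule.orthogonal_orthogonal]
  have hwmem : w ∈ LinearMap.range (LinearMap.adjoint A) := by
    rw [hrange, Submodule.mem_orthogonal]
    exact hker
  obtain ⟨u₀, hu₀⟩ := hwmem
  have hβ : ∀ x ∈ LinearMap.range A, φ (A zs) + ((⟪u₀, x - A zs⟫:ℝ):EReal) ≤ φ x := by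
    rintro x ⟨z, rfl⟩
    have h1 : ⟪u₀, A z - A zs⟫ = ⟪w, z - zs⟫ := by
      rw [← map_sub, ← hu₀, LinearMap.adjoint_inner_left]
    rw [h1]
    exact hsub z
  obtain ⟨u, horth, hsubg⟩ := episep φ hconv hbot (LinearMap.range A) (A zs)
    ⟨zs, rfl⟩ r hbr u₀ hβ x₀ ⟨ζ₀, hx₀A⟩ hx₀ri
  refine ⟨u, r, hbr, ?_, hsubg⟩
  apply ext_inner_right ℝ
  intro z
  rw [LinearMap.adjoint_inner_left]
  have h1 : ⟪u - u₀, A z⟫ = (0:ℝ) := horth _ ⟨z, rfl⟩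
  rw [inner_sub_left] at h1
  have h2 : ⟪u₀, A z⟫ = ⟪w, z⟫ := by
    rw [← hu₀, LinearMap.adjoint_inner_left]
  linarith


end Aux

/-- under the relative-interior conditions
`ri(dom f*) ∩ range M* ≠ ∅` and `ri(dom g*) ∩ range C* ≠ ∅`, every `(z*, w*)` in the
extended solution set `S_e` comes from a saddle point: there exist `u*, v*` with
`w* = d - Cv*`, `w* = Mu*`, and `(u*, v*, z*)` a saddle point of `L`. -/
theorem extSolSet_subset_saddle (m1 m2 n : ℕ)
    (f : EuclideanSpace ℝ (Fin m1) → EReal) (g : EuclideanSpace ℝ (Fin m2) → EReal)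
    (hf : IsPCC f) (hg : IsPCC g)
    (M : EuclideanSpace ℝ (Fin m1) →ₗ[ℝ] EuclideanSpace ℝ (Fin n))
    (C : EuclideanSpace ℝ (Fin m2) →ₗ[ℝ] EuclideanSpace ℝ (Fin n))
    (d : EuclideanSpace ℝ (Fin n))
    (hA2 : (intrinsicInterior ℝ {w : EuclideanSpace ℝ (Fin m1) | fconj f w < ⊤} ∩
      Set.range (LinearMap.adjoint M)).Nonempty)
    (hA3 : (intrinsicInterior ℝ {w : EuclideanSpace ℝ (Fin m2) | fconj g w < ⊤} ∩
      Set.range (LinearMap.adjoint C)).Nonempty)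
    (zstar wstar : EuclideanSpace ℝ (Fin n))
    (hmem : (zstar, wstar) ∈ extSolSet f g M C d) :
    ∃ (ustar : EuclideanSpace ℝ (Fin m1)) (vstar : EuclideanSpace ℝ (Fin m2)),
      wstar = d - C vstar ∧ wstar = M ustar ∧ IsSaddle f g M C d ustar vstar zstar := by
  classical
  obtain ⟨hs1, hs2⟩ := hmem
  set A₁ : EuclideanSpace ℝ (Fin n) →ₗ[ℝ] EuclideanSpace ℝ (Fin m1) :=
    -(LinearMap.adjoint M) with hA₁def
  set A₂ : EuclideanSpace ℝ (Fin n) →ₗ[ℝ] EuclideanSpace ℝ (Fin m2) :=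
    -(LinearMap.adjoint C) with hA₂def
  obtain ⟨x₀, hx₀ri, ζ', hζ'⟩ := hA2
  obtain ⟨y₀, hy₀ri, η', hη'⟩ := hA3
  have hx₀A : A₁ (-ζ') = x₀ := by
    rw [hA₁def]
    simp [hζ']
  have hy₀A : A₂ (-η') = y₀ := by
    rw [hA₂def]
    simp [hη']
  obtain ⟨xf, hxf⟩ := hf.2.1
  obtain ⟨rf, hrf⟩ := er_real_of_ne _ (hf.1 xf) hxf
  obtain ⟨xg, hxg⟩ := hg.2.1
  obtain ⟨rg, hrg⟩ := er_real_of_ne _ (hg.1 xg) hxg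
  -- first application of `core`
  have hsub1 : ∀ z', fconj f (A₁ zstar) + ((⟪-wstar, z' - zstar⟫:ℝ):EReal)
      ≤ fconj f (A₁ z') := fun z' => hs1 z'
  obtain ⟨ustar, r₁, hb₁r, hadj1, hsubg1⟩ :=
    core (fconj f) (fconj_convex f hf.1) (fconj_ne_bot hrf) A₁ zstar (-wstar) hsub1
      x₀ hx₀ri (-ζ') hx₀A
  have hMu : M ustar = wstar := by
    have h1 : LinearMap.adjoint A₁ ustar = -wstar := hadj1
    rw [hA₁def, map_neg, LinearMap.adjoint_adjoint] at h1
    have h2 : -(M ustar) = -wstar := h1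
    exact neg_inj.1 h2
  -- second application of `core`
  have hsub2 : ∀ z', fconj g (A₂ zstar) + ((⟪wstar - d, z' - zstar⟫:ℝ):EReal)
      ≤ fconj g (A₂ z') := by
    intro z'
    have h0 : (fconj g (A₂ zstar) + ((⟪d, zstar⟫:ℝ):EReal)) + ((⟪wstar, z' - zstar⟫:ℝ):EReal)
        ≤ fconj g (A₂ z') + ((⟪d, z'⟫:ℝ):EReal) := hs2 z'
    rw [add_assoc, ← EReal.coe_add] at h0
    have h1 := (er_shift _ _ _ _).1 h0
    have h2 : ⟪d, zstar⟫ + ⟪wstar, z' - zstar⟫ - ⟪d, z'⟫ = ⟪wstar - d, z' - zstar⟫ := by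
      rw [inner_sub_left]
      rw [show (⟪d, z' - zstar⟫:ℝ) = ⟪d, z'⟫ - ⟪d, zstar⟫ from by rw [inner_sub_right]]
      ring
    rwa [h2] at h1
  obtain ⟨vstar, r₂, hb₂r, hadj2, hsubg2⟩ :=
    core (fconj g) (fconj_convex g hg.1) (fconj_ne_bot hrg) A₂ zstar (wstar - d) hsub2
      y₀ hy₀ri (-η') hy₀A
  have hCv : C vstar = d - wstar := by
    have h1 : LinearMap.adjoint A₂ vstar = wstar - d := hadj2
    rw [hA₂def, map_neg, LinearMap.adjoint_adjoint] at h1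
    have h2 : -(C vstar) = wstar - d := h1
    have h3 : C vstar = -(wstar - d) := by rw [← h2]; abel
    rw [h3]; abel
  -- Fenchel–Moreau at the two points
  have hfu : f ustar = ((⟪ustar, A₁ zstar⟫ - r₁ : ℝ):EReal) :=
    fm_point f hf.2.2.2 hf.1 hf.2.2.1 xf rf hrf (A₁ zstar) ustar r₁ hb₁r hsubg1
  have hgv : g vstar = ((⟪vstar, A₂ zstar⟫ - r₂ : ℝ):EReal) :=
    fm_point g hg.2.2.2 hg.1 hg.2.2.1 xg rg hrg (A₂ zstar) vstar r₂ hb₂r hsubg2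
  -- Fenchel–Young bounds
  have hFYf : ∀ u, ((⟪A₁ zstar, u⟫ - r₁ : ℝ):EReal) ≤ f u :=
    fun u => fy_minorant (le_of_eq hb₁r) u
  have hFYg : ∀ v, ((⟪A₂ zstar, v⟫ - r₂ : ℝ):EReal) ≤ g v :=
    fun v => fy_minorant (le_of_eq hb₂r) v
  -- inner product identities
  have hiM : ∀ (u : EuclideanSpace ℝ (Fin m1)) (z : EuclideanSpace ℝ (Fin n)),
      ⟪u, A₁ z⟫ = -⟪M u, z⟫ := by
    intro u z
    have h1 : (A₁ z : EuclideanSpace ℝ (Fin m1)) = -(LinearMap.adjoint M z) := rfl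
    rw [h1, inner_neg_right]
    congr 1
    rw [real_inner_comm, LinearMap.adjoint_inner_left, real_inner_comm]
  have hiC : ∀ (v : EuclideanSpace ℝ (Fin m2)) (z : EuclideanSpace ℝ (Fin n)),
      ⟪v, A₂ z⟫ = -⟪C v, z⟫ := by
    intro v z
    have h1 : (A₂ z : EuclideanSpace ℝ (Fin m2)) = -(LinearMap.adjoint C z) := rfl
    rw [h1, inner_neg_right]
    congr 1
    rw [real_inner_comm, LinearMap.adjoint_inner_left, real_inner_comm]
  have hsum0 : M ustar + C vstar - d = 0 := by
    rw [hMu, hCv]; abel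
  set Rv : ℝ := ⟪ustar, A₁ zstar⟫ - r₁ + (⟪vstar, A₂ zstar⟫ - r₂) with hRv
  have hLval : ∀ ζ, Lag f g M C d ustar vstar ζ = ((Rv:ℝ):EReal) := by
    intro ζ
    show f ustar + g vstar + ((⟪M ustar + C vstar - d, ζ⟫:ℝ):EReal) = _
    rw [hfu, hgv, hsum0, inner_zero_left, EReal.coe_zero, add_zero, ← EReal.coe_add]
  refine ⟨ustar, vstar, ?_, hMu.symm, ?_, ?_, ?_, ?_⟩
  · rw [hCv]; abel
  · rw [hLval]; exact EReal.coe_ne_top _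
  · rw [hLval]; exact EReal.coe_ne_bot _
  · intro u v
    rw [hLval]
    show ((Rv:ℝ):EReal) ≤ f u + g v + ((⟪M u + C v - d, zstar⟫:ℝ):EReal)
    have h1 := hFYf u
    have h2 := hFYg v
    calc ((Rv:ℝ):EReal) ≤ ((⟪A₁ zstar, u⟫ - r₁:ℝ):EReal) + ((⟪A₂ zstar, v⟫ - r₂:ℝ):EReal)
          + ((⟪M u + C v - d, zstar⟫:ℝ):EReal) := by
          rw [← EReal.coe_add, ← EReal.coe_add, EReal.coe_le_coe_iff]
          have e1 : (⟪M u + C v - d, zstar⟫:ℝ)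
              = ⟪M u, zstar⟫ + ⟪C v, zstar⟫ - ⟪d, zstar⟫ := by
            rw [inner_sub_left, inner_add_left]
          have e2 := hiM u zstar
          have e3 := hiC v zstar
          have e4 := hiM ustar zstar
          have e5 := hiC vstar zstar
          rw [hMu] at e4
          rw [hCv] at e5
          have e6 : (⟪d - wstar, zstar⟫:ℝ) = ⟪d, zstar⟫ - ⟪wstar, zstar⟫ := by
            rw [inner_sub_left]
          have c1 : (⟪A₁ zstar, u⟫:ℝ) = ⟪u, A₁ zstar⟫ := real_inner_comm _ _
          have c2 : (⟪A₂ zstar, v⟫:ℝ) = ⟪v, A₂ zstar⟫ := real_inner_comm _ _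
          rw [hRv]
          rw [e1, c1, c2, e2, e3]
          linarith [e4, e5, e6]
      _ ≤ f u + g v + ((⟪M u + C v - d, zstar⟫:ℝ):EReal) :=
          add_le_add (add_le_add h1 h2) le_rfl
  · intro ζ
    rw [hLval, hLval]
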